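/- Let (M, ℓ) be a forward metric spacetime in which every point x satisfies x ∈ closure(I⁻(x)). Then for all x, y ∈ M, the inclusion I⁻(x) ⊆ I⁻(y) implies x ≤ y. -/
import Mathlib


open Filter Topology

/-- Chronology determines causality: in a forward metric spacetime in which every point
can be approximated by points of its chronological past, the inclusion
`I⁻(x) ⊆ I⁻(y)` implies `x ≤ y`. -/
theorem chronology_determines_causality
    {M : Type*} [inst : TopologicalSpace M] [PolishSpace M]
    (ℓ : M → M → EReal)
    (htop : inst = TopologicalSpace.generateFrom
      {s : Set M | ∃ x : M, s = {y | 0 < ℓ x y} ∨ s = {y | 0 < ℓ y x}})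
    (hrange : ∀ x y : M, ℓ x y ≠ ⊥ → 0 ≤ ℓ x y)
    (hrefl : ∀ x : M, 0 ≤ ℓ x x)
    (hrt : ∀ x y z : M, 0 ≤ ℓ x y → 0 ≤ ℓ y z → ℓ x y + ℓ y z ≤ ℓ x z)
    (hclosed : IsClosed {p : M × M | 0 ≤ ℓ p.1 p.2})
    (hforward : ∀ (y : ℕ → M) (x z : M), (∀ i, 0 ≤ ℓ x (y i)) →
      (∀ i, 0 ≤ ℓ (y i) (y (i+1))) → (∀ i, 0 ≤ ℓ (y i) z) →
      ∃ p : M, Filter.Tendsto y Filter.atTop (nhds p))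
    (happrox : ∀ x : M, x ∈ closure {z : M | 0 < ℓ z x})
    (x y : M) (h : {z : M | 0 < ℓ z x} ⊆ {z : M | 0 < ℓ z y}) :
    0 ≤ ℓ x y := by
  obtain ⟨u, hu, hlim⟩ := mem_closure_iff_seq_limit.mp (happrox x)
  have hmem : ∀ n, ((u n, y) : M × M) ∈ {p : M × M | 0 ≤ ℓ p.1 p.2} :=
    fun n => show (0:EReal) ≤ ℓ (u n) y from le_of_lt (h (hu n))
  have : Tendsto (fun n => ((u n, y) : M × M)) atTop (nhds (x, y)) :=
    hlim.prodMk_nhds tendsto_const_nhds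
  exact hclosed.mem_of_tendsto this (Filter.Eventually.of_forall hmem)
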